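/- If G is a connected undirected weighted graph, then the graph G# whose adjacency matrix is the group inverse A# of the adjacency matrix A of G is also connected. -/
import Mathlib


open SimpleGraph

/-- `X` is the group inverse of `A`. -/
def IsGroupInverse {n : Type*} [Fintype n] (A X : Matrix n n ℝ) : Prop :=
  A * X * A = A ∧ X * A * X = X ∧ A * X = X * A

/-- A matching of a graph: a set of pairwise non-incident edges. -/
def IsMatching {V : Type*} (G : SimpleGraph V) (M : Finset (Sym2 V)) : Prop :=
  (↑M : Set (Sym2 V)) ⊆ G.edgeSet ∧
    ∀ e ∈ M, ∀ f ∈ M, e ≠ f → ∀ v : V, ¬(v ∈ e ∧ v ∈ f)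

/-- A maximum matching: a matching of maximum cardinality. -/
def IsMaxMatching {V : Type*} (G : SimpleGraph V) (M : Finset (Sym2 V)) : Prop :=
  IsMatching G M ∧ ∀ N : Finset (Sym2 V), IsMatching G N → N.card ≤ M.card

/-- A nonempty list of edges alternately in and out of `M`,
beginning and ending with edges of `M`. -/
def IsAltEdgeList {V : Type*} (M : Set (Sym2 V)) : List (Sym2 V) → Prop
  | [] => False
  | [e] => e ∈ M
  | e :: f :: rest => e ∈ M ∧ f ∉ M ∧ IsAltEdgeList M rest

/-- A pair of vertices is maximally matchable if they are joined by a path that is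
alternating with respect to some maximum matching. -/
def MaxMatchable {V : Type*} (G : SimpleGraph V) (u v : V) : Prop :=
  ∃ (p : G.Walk u v) (M : Finset (Sym2 V)),
    p.IsPath ∧ IsMaxMatching G M ∧ IsAltEdgeList (↑M) p.edges

/-- `G` is a star: some center `c` is adjacent to exactly the other vertices,
and there are no other edges. -/
def IsStar {V : Type*} (G : SimpleGraph V) : Prop :=
  ∃ c : V, ∀ u v : V, G.Adj u v ↔ ((u = c ∧ v ≠ c) ∨ (v = c ∧ u ≠ c))

/-- The class 𝕋: trees with at least one non-pendant vertex in which every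
non-pendant vertex is adjacent to a pendant vertex. -/
def InClassT {V : Type*} [Fintype V] (T : SimpleGraph V) [DecidableRel T.Adj] : Prop :=
  T.IsTree ∧ (∃ v, T.degree v ≠ 1) ∧
    ∀ v, T.degree v ≠ 1 → ∃ u, T.Adj v u ∧ T.degree u = 1

/-- The number of pendant neighbours of `v`. -/
def pendantNbrs {V : Type*} [Fintype V] [DecidableEq V] (T : SimpleGraph V)
    [DecidableRel T.Adj] (v : V) : ℕ :=
  ((T.neighborFinset v).filter fun u => T.degree u = 1).card


namespace GIAux

open Matrix Polynomial

variable {V : Type*} [Fintype V]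

lemma gi_symm {A X : Matrix V V ℝ} (h : IsGroupInverse A X) : IsGroupInverse X A :=
  ⟨h.2.1, h.1, h.2.2.symm⟩

lemma gi_unique {A Y Z : Matrix V V ℝ} (hY : IsGroupInverse A Y)
    (hZ : IsGroupInverse A Z) : Y = Z := by
  obtain ⟨hY1, hY2, hY3⟩ := hY
  obtain ⟨hZ1, hZ2, hZ3⟩ := hZ
  have hEF : A * Y = A * Z := by
    have h1 : A * Y * (A * Z) = A * Z := by
      rw [← Matrix.mul_assoc, hY1]
    have h2 : A * Y * (A * Z) = A * Y := by
      calc A * Y * (A * Z) = Y * A * (Z * A) := by rw [hY3, hZ3]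
        _ = Y * (A * Z * A) := by simp only [Matrix.mul_assoc]
        _ = Y * A := by rw [hZ1]
        _ = A * Y := hY3.symm
    rw [← h2, h1]
  have hYeq : Y = Y * (A * Z) := by
    conv_lhs => rw [← hY2]
    rw [← hEF, Matrix.mul_assoc]
  have hZeq : Z = Y * (A * Z) := by
    calc Z = Z * A * Z := hZ2.symm
      _ = (A * Z) * Z := by rw [hZ3]
      _ = (A * Y) * Z := by rw [hEF]
      _ = (Y * A) * Z := by rw [hY3]
      _ = Y * (A * Z) := by rw [Matrix.mul_assoc]
  exact hYeq.trans hZeq.symm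

lemma gi_transpose {A X : Matrix V V ℝ} (hA : A.IsSymm) (h : IsGroupInverse A X) :
    IsGroupInverse A Xᵀ := by
  obtain ⟨h1, h2, h3⟩ := h
  have hAT : Aᵀ = A := hA
  refine ⟨?_, ?_, ?_⟩
  · calc A * Xᵀ * A = Aᵀ * Xᵀ * Aᵀ := by rw [hAT]
      _ = (A * (X * A))ᵀ := by rw [Matrix.transpose_mul, Matrix.transpose_mul, Matrix.mul_assoc]
      _ = (A * X * A)ᵀ := by rw [Matrix.mul_assoc]
      _ = Aᵀ := by rw [h1]
      _ = A := hAT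
  · calc Xᵀ * A * Xᵀ = Xᵀ * Aᵀ * Xᵀ := by rw [hAT]
      _ = (X * (A * X))ᵀ := by rw [Matrix.transpose_mul, Matrix.transpose_mul, Matrix.mul_assoc]
      _ = (X * A * X)ᵀ := by rw [Matrix.mul_assoc]
      _ = Xᵀ := by rw [h2]
  · calc A * Xᵀ = Aᵀ * Xᵀ := by rw [hAT]
      _ = (X * A)ᵀ := by rw [Matrix.transpose_mul]
      _ = (A * X)ᵀ := by rw [h3]
      _ = Xᵀ * Aᵀ := by rw [Matrix.transpose_mul]
      _ = Xᵀ * A := by rw [hAT]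

lemma diagonal_congr [DecidableEq V] {f g : V → ℝ} (h : ∀ i, f i = g i) :
    Matrix.diagonal f = Matrix.diagonal g := by
  rw [funext h]

lemma sandwich [DecidableEq V] {U : Matrix V V ℝ} (hU2 : star U * U = 1) (e f : V → ℝ) :
    (U * Matrix.diagonal e * star U) * (U * Matrix.diagonal f * star U)
      = U * Matrix.diagonal (fun i => e i * f i) * star U := by
  calc (U * Matrix.diagonal e * star U) * (U * Matrix.diagonal f * star U)
      = U * Matrix.diagonal e * (star U * U) * (Matrix.diagonal f * star U) := by
        simp only [Matrix.mul_assoc]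
    _ = U * (Matrix.diagonal e * Matrix.diagonal f) * star U := by
        rw [hU2, Matrix.mul_one]; simp only [Matrix.mul_assoc]
    _ = U * Matrix.diagonal (fun i => e i * f i) * star U := by
        rw [Matrix.diagonal_mul_diagonal]

lemma aeval_unitary_diagonal [DecidableEq V] {U : Matrix V V ℝ} (hU1 : U * star U = 1)
    (hU2 : star U * U = 1) (d : V → ℝ) (p : Polynomial ℝ) :
    Polynomial.aeval (U * Matrix.diagonal d * star U) p
      = U * Matrix.diagonal (fun i => Polynomial.eval (d i) p) * star U := by
  induction p using Polynomial.induction_on with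
  | C a =>
    have h1 : (Matrix.diagonal (fun _ : V => a) : Matrix V V ℝ) = a • (1 : Matrix V V ℝ) :=
      (Matrix.smul_one_eq_diagonal a).symm
    simp only [eval_C, aeval_C, h1, Matrix.mul_smul, Matrix.smul_mul, Matrix.mul_one, hU1]
    rw [Algebra.algebraMap_eq_smul_one]
  | add p q hp hq =>
    rw [map_add, hp, hq]
    have h2 : (Matrix.diagonal fun i => eval (d i) (p + q))
        = (Matrix.diagonal fun i => eval (d i) p) + Matrix.diagonal fun i => eval (d i) q := by
      rw [Matrix.diagonal_add]
      exact diagonal_congr fun i => by rw [Polynomial.eval_add]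
    rw [h2, Matrix.mul_add, Matrix.add_mul]
  | monomial n a ih =>
    have hstep : (C a * X ^ (n + 1) : Polynomial ℝ) = (C a * X ^ n) * X := by
      rw [pow_succ, mul_assoc]
    rw [hstep, _root_.map_mul, ih, aeval_X]
    have hXd : Polynomial.aeval (U * Matrix.diagonal d * star U) (X : Polynomial ℝ)
        = U * Matrix.diagonal d * star U := aeval_X _
    calc (U * (Matrix.diagonal fun i => eval (d i) (C a * X ^ n)) * star U)
          * (U * Matrix.diagonal d * star U)
        = U * (Matrix.diagonal fun i => eval (d i) (C a * X ^ n) * d i) * star U :=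
          sandwich hU2 _ _
      _ = U * (Matrix.diagonal fun i => eval (d i) ((C a * X ^ n) * X)) * star U := by
          congr 2
          exact diagonal_congr fun i => by simp
  
lemma aeval_block [DecidableEq V] {S : Set V} {M : Matrix V V ℝ}
    (hS : ∀ i ∈ S, ∀ j ∉ S, M i j = 0 ∧ M j i = 0) (p : Polynomial ℝ) :
    ∀ i ∈ S, ∀ j ∉ S, (Polynomial.aeval M p) i j = 0 ∧ (Polynomial.aeval M p) j i = 0 := by
  induction p using Polynomial.induction_on with
  | C a =>
    intro i hi j hj
    have hij : i ≠ j := fun h => hj (h ▸ hi)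
    constructor <;>
      simp [aeval_C, Matrix.algebraMap_matrix_apply, hij, hij.symm]
  | add p q hp hq =>
    intro i hi j hj
    obtain ⟨hp1, hp2⟩ := hp i hi j hj
    obtain ⟨hq1, hq2⟩ := hq i hi j hj
    constructor <;> simp [map_add, Matrix.add_apply, hp1, hp2, hq1, hq2]
  | monomial n a ih =>
    intro i hi j hj
    have hstep : (C a * X ^ (n + 1) : Polynomial ℝ) = (C a * X ^ n) * X := by
      rw [pow_succ, mul_assoc]
    rw [hstep, _root_.map_mul, aeval_X]
    constructor
    · rw [Matrix.mul_apply]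
      refine Finset.sum_eq_zero fun k _ => ?_
      by_cases hk : k ∈ S
      · rw [(hS k hk j hj).1, mul_zero]
      · rw [(ih i hi k hk).1, zero_mul]
    · rw [Matrix.mul_apply]
      refine Finset.sum_eq_zero fun k _ => ?_
      by_cases hk : k ∈ S
      · rw [(ih k hk j hj).2, zero_mul]
      · rw [(hS i hi k hk).2, mul_zero]

lemma cross_of_walk {G : SimpleGraph V} {S : Set V} :
    ∀ {u v : V}, G.Walk u v → u ∈ S → v ∉ S → ∃ a b, a ∈ S ∧ b ∉ S ∧ G.Adj a b := by
  intro u v w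
  induction w with
  | nil => intro h1 h2; exact absurd h1 h2
  | @cons u x v h p ih =>
    intro h1 h2
    by_cases hx : x ∈ S
    · exact ih hx h2
    · exact ⟨u, x, h1, hx, h⟩

end GIAux

/-- If a weighted graph is connected, then its group inverse graph
is connected. -/
theorem group_inverse_graph_connected {V : Type*} [Fintype V]
    (A X : Matrix V V ℝ) (hA : A.IsSymm)
    (hconn : (SimpleGraph.fromRel fun i j => A i j ≠ 0).Connected)
    (hX : IsGroupInverse A X) :
    (SimpleGraph.fromRel fun i j => X i j ≠ 0).Connected := by
  classical
  obtain ⟨hpre, hne⟩ := (SimpleGraph.connected_iff _).mp hconn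
  rw [SimpleGraph.connected_iff]
  refine ⟨?_, hne⟩
  -- X is symmetric
  have hXsymm : X.transpose = X := GIAux.gi_unique (GIAux.gi_transpose hA hX) hX
  have hH : X.IsHermitian := by
    show X.conjTranspose = X
    ext i j
    rw [Matrix.conjTranspose_apply, star_trivial]
    exact congrFun (congrFun hXsymm i) j
  -- spectral decomposition
  set U : Matrix V V ℝ := (hH.eigenvectorUnitary : Matrix V V ℝ) with hUdef
  have hUmem := hH.eigenvectorUnitary.2
  have hU1 : U * star U = 1 := (Matrix.mem_unitaryGroup_iff).mp hUmem
  have hU2 : star U * U = 1 := (Matrix.mem_unitaryGroup_iff').mp hUmem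
  set d : V → ℝ := RCLike.ofReal ∘ hH.eigenvalues with hddef
  have hspec : X = U * Matrix.diagonal d * star U := hH.spectral_theorem
  -- interpolation polynomial
  set s : Finset ℝ := Finset.univ.image d with hsdef
  set p : Polynomial ℝ := Lagrange.interpolate s id (fun x => x⁻¹) with hpdef
  have hpd : ∀ i : V, Polynomial.eval (d i) p = (d i)⁻¹ := by
    intro i
    have hi : d i ∈ s := Finset.mem_image_of_mem d (Finset.mem_univ i)
    exact Lagrange.eval_interpolate_at_node _ (Set.injOn_id _) hi
  -- aeval X p
  have haev : Polynomial.aeval X p = U * Matrix.diagonal (fun i => (d i)⁻¹) * star U := by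
    rw [hspec, GIAux.aeval_unitary_diagonal hU1 hU2]
    congr 2
    exact GIAux.diagonal_congr hpd
  -- Y is a group inverse of X
  set Y : Matrix V V ℝ := U * Matrix.diagonal (fun i => (d i)⁻¹) * star U with hYdef
  have hYgi : IsGroupInverse X Y := by
    have hdd : ∀ i, d i * (d i)⁻¹ * d i = d i := by
      intro i
      rcases eq_or_ne (d i) 0 with h | h
      · simp [h]
      · field_simp
    have hdd' : ∀ i, (d i)⁻¹ * d i * (d i)⁻¹ = (d i)⁻¹ := by
      intro i
      rcases eq_or_ne (d i) 0 with h | h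
      · simp [h]
      · field_simp
    refine ⟨?_, ?_, ?_⟩
    · rw [hspec, hYdef, GIAux.sandwich hU2, GIAux.sandwich hU2]
      congr 2
      exact GIAux.diagonal_congr hdd
    · rw [hspec, hYdef, GIAux.sandwich hU2, GIAux.sandwich hU2]
      congr 2
      exact GIAux.diagonal_congr hdd'
    · rw [hspec, hYdef, GIAux.sandwich hU2, GIAux.sandwich hU2]
      congr 2
      exact GIAux.diagonal_congr fun i => mul_comm _ _
  -- A equals aeval X p
  have hAY : A = Polynomial.aeval X p := by
    rw [haev]
    exact GIAux.gi_unique (GIAux.gi_symm hX) hYgi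
  -- preconnectedness
  intro u v
  by_contra hR
  set S : Set V := {w | (SimpleGraph.fromRel fun i j => X i j ≠ 0).Reachable u w} with hSdef
  have hu : u ∈ S := SimpleGraph.Reachable.refl u
  have hv : v ∉ S := hR
  have hS : ∀ i ∈ S, ∀ j ∉ S, X i j = 0 ∧ X j i = 0 := by
    intro i hi j hj
    have hij : i ≠ j := fun h => hj (h ▸ hi)
    have hnadj : ¬ (SimpleGraph.fromRel fun i j => X i j ≠ 0).Adj i j := by
      intro hadj
      exact hj (hi.trans hadj.reachable)
    rw [SimpleGraph.fromRel_adj] at hnadj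
    push_neg at hnadj
    have := hnadj hij
    exact ⟨this.1, this.2⟩
  have hAblock := GIAux.aeval_block hS p
  obtain ⟨w⟩ := hpre u v
  obtain ⟨a, b, ha, hb, hab⟩ := GIAux.cross_of_walk w hu hv
  rw [SimpleGraph.fromRel_adj] at hab
  obtain ⟨hA1, hA2⟩ := hAblock a ha b hb
  rcases hab.2 with h | h
  · exact h (by rw [hAY]; exact hA1)
  · exact h (by rw [hAY]; exact hA2)
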